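/- Let κ > 0 and γ, ξ ∈ ℝ, and let u : [0, ∞) → ℂ be differentiable with u'(t) = −(κ + iξ)|u(t)|² u(t) + γ u(t) for all t ≥ 0. Then for every t ≥ 0, |u(t)|² ≤ max(|u(0)|², γ/κ). -/

import Mathlib

theorem stmt_12 (κ γ ξ : ℝ) (hκ : 0 < κ) (u : ℝ → ℂ)
    (hu : ∀ t : ℝ, 0 ≤ t → HasDerivAt u
      (-((κ : ℂ) + (ξ : ℂ) * Complex.I) * ↑(‖u t‖ ^ 2) * u t + (γ : ℂ) * u t) t) :
    ∀ t : ℝ, 0 ≤ t → ‖u t‖ ^ 2 ≤ max (‖u 0‖ ^ 2) (γ / κ) := by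
  set M := max (‖u 0‖ ^ 2) (γ / κ) with hM
  set f : ℝ → ℝ := fun t => Complex.normSq (u t) with hfdef
  set f' : ℝ → ℝ := fun t =>
    2 * (γ * Complex.normSq (u t) - κ * Complex.normSq (u t) ^ 2) with hf'def
  have habs : ∀ t, ‖u t‖ ^ 2 = f t := fun t => Complex.sq_norm (u t)
  have hderiv : ∀ t, 0 ≤ t → HasDerivAt f (f' t) t := by
    intro t ht
    have hd := hu t ht
    set d : ℂ := -((κ : ℂ) + (ξ : ℂ) * Complex.I) * ↑(‖u t‖ ^ 2) * u t
        + (γ : ℂ) * u t with hdd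
    have hre : HasDerivAt (fun s => (u s).re) d.re t :=
      Complex.reCLM.hasFDerivAt.comp_hasDerivAt t hd
    have him : HasDerivAt (fun s => (u s).im) d.im t :=
      Complex.imCLM.hasFDerivAt.comp_hasDerivAt t hd
    have h2 : HasDerivAt (fun s => (u s).re * (u s).re + (u s).im * (u s).im)
        (d.re * (u t).re + (u t).re * d.re + (d.im * (u t).im + (u t).im * d.im)) t :=
      (hre.mul hre).add (him.mul him)
    have hfeq : f = fun s => (u s).re * (u s).re + (u s).im * (u s).im := by
      funext s; simp [hfdef, Complex.normSq_apply]
    rw [hfeq]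
    convert h2 using 1
    simp only [hf'def, hdd, Complex.add_re, Complex.add_im, Complex.mul_re, Complex.mul_im,
      Complex.neg_re, Complex.neg_im, Complex.ofReal_re, Complex.ofReal_im, Complex.I_re,
      Complex.I_im, Complex.sq_norm, Complex.normSq_apply]
    ring
  have hcont : ∀ b : ℝ, ContinuousOn f (Set.Icc 0 b) := by
    intro b x hx
    exact (Complex.continuous_normSq.continuousAt.comp
      (hu x hx.1).differentiableAt.continuousAt).continuousWithinAt
  have hM0 : γ ≤ κ * M := by
    have : γ / κ ≤ M := le_max_right _ _
    calc γ = κ * (γ / κ) := by field_simp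
    _ ≤ κ * M := by exact mul_le_mul_of_nonneg_left this hκ.le
  have key : ∀ t : ℝ, 0 ≤ t → ∀ r : ℝ, 0 < r → f t ≤ M + r * t := by
    intro b hb r hr
    have := image_le_of_deriv_right_lt_deriv_boundary (f := f) (f' := f')
      (a := 0) (b := b) (B := fun x => M + r * x) (B' := fun _ => r)
      (hcont b) (fun x hx => (hderiv x hx.1).hasDerivWithinAt)
      (by
        simp only [mul_zero, add_zero]
        calc f 0 ≤ max (f 0) (γ / κ) := le_max_left _ _
        _ = M := by rw [hM, habs 0])
      (fun x => by simpa using ((hasDerivAt_id x).const_mul r).const_add M)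
      (by
        intro x hx hfx
        have hx0 : 0 ≤ x := hx.1
        have hfxM : M ≤ f x := by
          rw [hfx]
          nlinarith [mul_nonneg hr.le hx0]
        have hfnn : 0 ≤ f x := Complex.normSq_nonneg _
        have : γ ≤ κ * f x := le_trans hM0 (mul_le_mul_of_nonneg_left hfxM hκ.le)
        have hfle : f' x ≤ 0 := by
          simp only [hf'def]
          nlinarith
        linarith)
    exact this (Set.mem_Icc.2 ⟨hb, le_refl b⟩)
  intro t ht
  rw [habs]
  refine le_of_forall_pos_le_add ?_
  intro ε hε
  rcases eq_or_lt_of_le ht with h0 | h0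
  · have := key 0 le_rfl 1 one_pos
    have h00 : f 0 ≤ M := by
      calc f 0 ≤ max (f 0) (γ / κ) := le_max_left _ _
      _ = M := by rw [hM, habs 0]
    rw [← h0]; linarith
  · have := key t ht (ε / t) (div_pos hε h0)
    rwa [div_mul_cancel₀ _ (ne_of_gt h0)] at this
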